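/- If P ∈ ℝ[X,Y] satisfies P(X,Y) = −P(Y,X), 2P(X,Y) = P(Y,−X−Y) − P(X,−X−Y), and Y·P(Y,X−Y) + X·P(X,Y−X) = 0, then P is divisible by X·Y·(X+Y)·(X−Y)·(2X+Y)·(X+2Y) in ℝ[X,Y]. -/

import Mathlib

noncomputable section
open MvPolynomial

/-- The polynomial ring `ℝ[X,Y]`. -/
abbrev R2 : Type := MvPolynomial (Fin 2) ℝ

def Xv : R2 := MvPolynomial.X 0
def Yv : R2 := MvPolynomial.X 1

/-- Substitution `P(X,Y) ↦ P(p,q)`. -/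
def subst (p q : R2) (P : R2) : R2 := MvPolynomial.aeval ![p, q] P

lemma subst_X (a b : R2) : subst a b Xv = a := by simp [subst, Xv]
lemma subst_Y (a b : R2) : subst a b Yv = b := by simp [subst, Yv]
lemma subst_neg (a b P : R2) : subst a b (-P) = -subst a b P := map_neg (aeval ![a, b]) P
lemma subst_add (a b P Q : R2) : subst a b (P + Q) = subst a b P + subst a b Q :=
  map_add (aeval ![a, b]) P Q
lemma subst_sub (a b P Q : R2) : subst a b (P - Q) = subst a b P - subst a b Q :=
  map_sub (aeval ![a, b]) P Q
lemma subst_mul (a b P Q : R2) : subst a b (P * Q) = subst a b P * subst a b Q :=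
  map_mul (aeval ![a, b]) P Q
lemma subst_zero (a b : R2) : subst a b 0 = 0 := map_zero (aeval ![a, b])
lemma subst_two (a b : R2) : subst a b 2 = 2 := map_ofNat (aeval ![a, b]) 2

lemma subst_subst (a b p q P : R2) :
    subst a b (subst p q P) = subst (subst a b p) (subst a b q) P := by
  show (aeval ![a,b]) ((aeval ![p,q]) P) = _
  rw [MvPolynomial.comp_aeval_apply]
  have h : (fun i => (aeval ![a, b]) (![p, q] i)) = ![subst a b p, subst a b q] := by
    funext i; fin_cases i <;> simp [subst]
  rw [h]
  rfl

lemma dvd_sub_aeval (L : R2) (u : Fin 2 → R2) (hu : ∀ i : Fin 2, L ∣ (X i - u i)) (P : R2) :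
    L ∣ (P - aeval u P) := by
  induction P using MvPolynomial.induction_on with
  | C a => simp
  | add f g hf hg =>
      rw [map_add]
      exact (sub_add_sub_comm f (aeval u f) g (aeval u g)) ▸ dvd_add hf hg
  | mul_X f i hf =>
      rw [map_mul, aeval_X]
      have h : f * X i - aeval u f * u i
          = (f - aeval u f) * X i + aeval u f * (X i - u i) := by ring
      rw [h]
      exact dvd_add (hf.mul_right _) ((hu i).mul_left _)

lemma dvd_of_subst_left (p P : R2) (h : subst p Yv P = 0) : (Xv - p) ∣ P := by
  have := dvd_sub_aeval (Xv - p) ![p, Yv] (fun i => by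
    fin_cases i
    · simpa [Xv] using dvd_refl (Xv - p)
    · simp [Yv]) P
  rwa [show aeval ![p, Yv] P = subst p Yv P from rfl, h, sub_zero] at this

lemma dvd_of_subst_right (q P : R2) (h : subst Xv q P = 0) : (Yv - q) ∣ P := by
  have := dvd_sub_aeval (Yv - q) ![Xv, q] (fun i => by
    fin_cases i
    · simp [Xv]
    · simpa [Yv] using dvd_refl (Yv - q)) P
  rwa [show aeval ![Xv, q] P = subst Xv q P from rfl, h, sub_zero] at this

lemma prime_of_image (c : MvPolynomial (Fin 1) ℝ) (f : R2)
    (h : finSuccEquiv ℝ 1 f = Polynomial.X - Polynomial.C c) : Prime f := by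
  rw [← MulEquiv.prime_iff (finSuccEquiv ℝ 1).toMulEquiv]
  show Prime (finSuccEquiv ℝ 1 f)
  rw [h]
  exact Polynomial.prime_X_sub_C c

lemma eY : finSuccEquiv ℝ 1 Yv = Polynomial.C (X 0) := by
  have : Yv = X (Fin.succ 0) := rfl
  rw [this, finSuccEquiv_X_succ]

lemma prime_Xv : Prime Xv := by
  apply prime_of_image 0
  rw [map_zero, sub_zero]
  exact finSuccEquiv_X_zero

lemma prime_XpY : Prime (Xv + Yv) := by
  apply prime_of_image (-(X 0))
  rw [map_add, eY, map_neg, sub_neg_eq_add]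
  rw [show Xv = (X 0 : R2) from rfl, finSuccEquiv_X_zero]

lemma prime_XmY : Prime (Xv - Yv) := by
  apply prime_of_image (X 0)
  rw [map_sub, eY, show Xv = (X 0 : R2) from rfl, finSuccEquiv_X_zero]

lemma prime_Xp2Y : Prime (Xv + 2 * Yv) := by
  apply prime_of_image (-(2 * X 0))
  rw [map_add, map_mul, eY, map_ofNat, map_neg, sub_neg_eq_add]
  rw [show Xv = (X 0 : R2) from rfl, finSuccEquiv_X_zero, map_mul, map_ofNat]

def sw : R2 ≃ₐ[ℝ] R2 := renameEquiv ℝ (Equiv.swap (0 : Fin 2) 1)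

lemma sw_X : sw Xv = Yv := by simp [sw, Xv, Yv]
lemma sw_Y : sw Yv = Xv := by simp [sw, Xv, Yv]

lemma prime_Yv : Prime Yv := by
  have := (MulEquiv.prime_iff sw.toMulEquiv (p := Xv)).mpr prime_Xv
  rwa [show sw.toMulEquiv Xv = Yv from sw_X] at this

lemma prime_2XpY : Prime (2 * Xv + Yv) := by
  have := (MulEquiv.prime_iff sw.toMulEquiv (p := Xv + 2 * Yv)).mpr prime_Xp2Y
  have h2 : sw.toMulEquiv (Xv + 2 * Yv) = 2 * Xv + Yv := by
    show sw (Xv + 2 * Yv) = _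
    rw [map_add, map_mul, sw_X, sw_Y, map_ofNat]
    ring
  rwa [h2] at this

lemma cancel2 {a : R2} (h : (2 : R2) * a = 0) : a = 0 := by
  rcases mul_eq_zero.mp h with h' | h'
  · exact absurd h' two_ne_zero
  · exact h'

lemma cancel3 {a : R2} (h : (3 : R2) * a = 0) : a = 0 := by
  rcases mul_eq_zero.mp h with h' | h'
  · refine absurd h' ?_
    have hC : (3 : R2) = MvPolynomial.C (3 : ℝ) := by
      rw [map_ofNat]
    rw [hC]
    simp [MvPolynomial.C_eq_zero]
  · exact h'

lemma cancelX {a : R2} (h : Xv * a = 0) : a = 0 := by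
  rcases mul_eq_zero.mp h with h' | h'
  · exact absurd h' (MvPolynomial.X_ne_zero 0)
  · exact h'

lemma pstep {p a b : R2} (hp : Prime p) (h : p ∣ a * b) (hna : ¬ p ∣ a) : p ∣ b :=
  (hp.2.2 a b h).resolve_left hna

lemma not_dvd_of_eval (p q : R2) (v : Fin 2 → ℝ) (hq : eval v q = 0) (hp : eval v p ≠ 0) :
    ¬ q ∣ p := by
  rintro ⟨c, rfl⟩
  apply hp
  rw [map_mul, hq, zero_mul]

/-- If `P ∈ ℝ[X,Y]` satisfies `P(X,Y) = −P(Y,X)`,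
`2P(X,Y) = P(Y,−X−Y) − P(X,−X−Y)` and `Y·P(Y,X−Y) + X·P(X,Y−X) = 0`, then `P` is
divisible by `X·Y·(X+Y)·(X−Y)·(2X+Y)·(X+2Y)`. -/
theorem divisibility_of_solutions (P : R2)
    (hanti : subst Yv Xv P = -P)
    (h1 : 2 * P = subst Yv (-Xv - Yv) P - subst Xv (-Xv - Yv) P)
    (h2 : Yv * subst Yv (Xv - Yv) P + Xv * subst Xv (Yv - Xv) P = 0) :
    (Xv * Yv * (Xv + Yv) * (Xv - Yv) * (2 * Xv + Yv) * (Xv + 2 * Yv)) ∣ P := by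
  -- step A: P(X,X) = 0
  have hA : subst Xv Xv P = 0 := by
    have h := congrArg (subst Xv Xv) hanti
    simp only [subst_subst, subst_X, subst_Y, subst_neg] at h
    exact cancel2 (by linear_combination h)
  -- step B: P(X,0) = 0
  have hX0 : subst Xv 0 P = 0 := by
    have h := congrArg (subst Xv Xv) h2
    simp only [subst_subst, subst_X, subst_Y, subst_neg, subst_sub, subst_add, subst_mul,
      subst_zero, sub_self] at h
    exact cancelX (cancel2 (by linear_combination h))
  -- P(Y,0) = 0
  have hY0 : subst Yv 0 P = 0 := by
    have h := congrArg (subst Yv Yv) hX0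
    simp only [subst_subst, subst_X, subst_zero] at h
    exact h
  -- P(0,Y) = 0
  have h0Y : subst 0 Yv P = 0 := by
    have h := congrArg (subst 0 Yv) hanti
    simp only [subst_subst, subst_X, subst_Y, subst_neg] at h
    rw [hY0] at h
    exact neg_eq_zero.mp h.symm
  -- P(-Y,0) = 0
  have hmY0 : subst (-Yv) 0 P = 0 := by
    have h := congrArg (subst (-Yv) Yv) hX0
    simp only [subst_subst, subst_X, subst_zero] at h
    exact h
  -- P(-Y,Y) = 0
  have hmYY : subst (-Yv) Yv P = 0 := by
    have h := congrArg (subst (-Yv) Yv) h1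
    simp only [subst_subst, subst_X, subst_Y, subst_neg, subst_sub, subst_mul, subst_two,
      neg_neg, sub_self] at h
    rw [hY0, hmY0] at h
    exact cancel2 (by linear_combination h)
  -- P(Y,Y) = 0
  have hYY : subst Yv Yv P = 0 := by
    have h := congrArg (subst Yv Yv) hanti
    simp only [subst_subst, subst_X, subst_Y, subst_neg] at h
    exact cancel2 (by linear_combination h)
  -- P(X,-2X) = 0
  have hXm2X : subst Xv (-(2 * Xv)) P = 0 := by
    have ha := congrArg (subst Xv (-(2 * Xv))) hanti
    simp only [subst_subst, subst_X, subst_Y, subst_neg] at ha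
    have h := congrArg (subst Xv (-(2 * Xv))) h1
    simp only [subst_subst, subst_X, subst_Y, subst_neg, subst_sub, subst_mul, subst_two] at h
    rw [show (-Xv - -(2 * Xv) : R2) = Xv by ring] at h
    rw [hA, ha] at h
    exact cancel3 (by linear_combination h)
  -- P(Y,-2Y) = 0
  have hYm2Y : subst Yv (-(2 * Yv)) P = 0 := by
    have h := congrArg (subst Yv Yv) hXm2X
    simp only [subst_subst, subst_X, subst_Y, subst_neg, subst_mul, subst_two, subst_zero] at h
    exact h
  -- P(-2Y,Y) = 0
  have hm2YY : subst (-(2 * Yv)) Yv P = 0 := by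
    have h := congrArg (subst (-(2 * Yv)) Yv) hanti
    simp only [subst_subst, subst_X, subst_Y, subst_neg] at h
    rw [hYm2Y] at h
    exact neg_eq_zero.mp h.symm
  -- the six divisibilities
  have d1 : Xv ∣ P := by
    have := dvd_of_subst_left 0 P h0Y
    rwa [sub_zero] at this
  have d2 : Yv ∣ P := by
    have := dvd_of_subst_right 0 P hX0
    rwa [sub_zero] at this
  have d3 : (Xv + Yv) ∣ P := by
    have := dvd_of_subst_left (-Yv) P hmYY
    rwa [sub_neg_eq_add] at this
  have d4 : (Xv - Yv) ∣ P := dvd_of_subst_left Yv P hYY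
  have d5 : (2 * Xv + Yv) ∣ P := by
    have := dvd_of_subst_right (-(2 * Xv)) P hXm2X
    rwa [show (Yv - -(2 * Xv) : R2) = 2 * Xv + Yv by ring] at this
  have d6 : (Xv + 2 * Yv) ∣ P := by
    have := dvd_of_subst_left (-(2 * Yv)) P hm2YY
    rwa [sub_neg_eq_add] at this
  -- non-divisibility facts
  have n21 : ¬ Yv ∣ Xv := not_dvd_of_eval _ _ ![1, 0] (by simp [Yv]) (by simp [Xv])
  have n31 : ¬ (Xv + Yv) ∣ Xv := not_dvd_of_eval _ _ ![1, -1] (by simp [Xv, Yv]) (by simp [Xv])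
  have n32 : ¬ (Xv + Yv) ∣ Yv := not_dvd_of_eval _ _ ![1, -1] (by simp [Xv, Yv]) (by simp [Yv])
  have n41 : ¬ (Xv - Yv) ∣ Xv := not_dvd_of_eval _ _ ![1, 1] (by simp [Xv, Yv]) (by simp [Xv])
  have n42 : ¬ (Xv - Yv) ∣ Yv := not_dvd_of_eval _ _ ![1, 1] (by simp [Xv, Yv]) (by simp [Yv])
  have n43 : ¬ (Xv - Yv) ∣ (Xv + Yv) :=
    not_dvd_of_eval _ _ ![1, 1] (by simp [Xv, Yv]) (by norm_num [Xv, Yv])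
  have n51 : ¬ (2 * Xv + Yv) ∣ Xv :=
    not_dvd_of_eval _ _ ![1, -2] (by norm_num [Xv, Yv]) (by simp [Xv])
  have n52 : ¬ (2 * Xv + Yv) ∣ Yv :=
    not_dvd_of_eval _ _ ![1, -2] (by norm_num [Xv, Yv]) (by norm_num [Yv])
  have n53 : ¬ (2 * Xv + Yv) ∣ (Xv + Yv) :=
    not_dvd_of_eval _ _ ![1, -2] (by norm_num [Xv, Yv]) (by norm_num [Xv, Yv])
  have n54 : ¬ (2 * Xv + Yv) ∣ (Xv - Yv) :=
    not_dvd_of_eval _ _ ![1, -2] (by norm_num [Xv, Yv]) (by norm_num [Xv, Yv])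
  have n61 : ¬ (Xv + 2 * Yv) ∣ Xv :=
    not_dvd_of_eval _ _ ![-2, 1] (by norm_num [Xv, Yv]) (by norm_num [Xv])
  have n62 : ¬ (Xv + 2 * Yv) ∣ Yv :=
    not_dvd_of_eval _ _ ![-2, 1] (by norm_num [Xv, Yv]) (by norm_num [Yv])
  have n63 : ¬ (Xv + 2 * Yv) ∣ (Xv + Yv) :=
    not_dvd_of_eval _ _ ![-2, 1] (by norm_num [Xv, Yv]) (by norm_num [Xv, Yv])
  have n64 : ¬ (Xv + 2 * Yv) ∣ (Xv - Yv) :=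
    not_dvd_of_eval _ _ ![-2, 1] (by norm_num [Xv, Yv]) (by norm_num [Xv, Yv])
  have n65 : ¬ (Xv + 2 * Yv) ∣ (2 * Xv + Yv) :=
    not_dvd_of_eval _ _ ![-2, 1] (by norm_num [Xv, Yv]) (by norm_num [Xv, Yv])
  -- assemble
  obtain ⟨Q1, e1⟩ := d1
  have d2' : Yv ∣ Q1 := pstep prime_Yv (e1 ▸ d2) n21
  obtain ⟨Q2, e2⟩ := d2'
  have d3' : (Xv + Yv) ∣ Q2 := by
    have h : (Xv + Yv) ∣ Xv * (Yv * Q2) := by rw [← e2, ← e1]; exact d3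
    exact pstep prime_XpY (pstep prime_XpY h n31) n32
  obtain ⟨Q3, e3⟩ := d3'
  have d4' : (Xv - Yv) ∣ Q3 := by
    have h : (Xv - Yv) ∣ Xv * (Yv * ((Xv + Yv) * Q3)) := by rw [← e3, ← e2, ← e1]; exact d4
    exact pstep prime_XmY (pstep prime_XmY (pstep prime_XmY h n41) n42) n43
  obtain ⟨Q4, e4⟩ := d4'
  have d5' : (2 * Xv + Yv) ∣ Q4 := by
    have h : (2 * Xv + Yv) ∣ Xv * (Yv * ((Xv + Yv) * ((Xv - Yv) * Q4))) := by
      rw [← e4, ← e3, ← e2, ← e1]; exact d5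
    exact pstep prime_2XpY
      (pstep prime_2XpY (pstep prime_2XpY (pstep prime_2XpY h n51) n52) n53) n54
  obtain ⟨Q5, e5⟩ := d5'
  have d6' : (Xv + 2 * Yv) ∣ Q5 := by
    have h : (Xv + 2 * Yv) ∣ Xv * (Yv * ((Xv + Yv) * ((Xv - Yv) * ((2 * Xv + Yv) * Q5)))) := by
      rw [← e5, ← e4, ← e3, ← e2, ← e1]; exact d6
    exact pstep prime_Xp2Y (pstep prime_Xp2Y (pstep prime_Xp2Y
      (pstep prime_Xp2Y (pstep prime_Xp2Y h n61) n62) n63) n64) n65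
  obtain ⟨Q6, e6⟩ := d6'
  exact ⟨Q6, by rw [e1, e2, e3, e4, e5, e6]; ring⟩
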